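/- arXiv:2601.10280 — 7 statements merged into one kernel-verified Lean document; each statement's English description precedes it below -/
import Mathlib

section
/- For every b > 0 and every real α ≥ (1/(2b)) - (coth b)/2, and every continuously differentiable compactly supported function ψ on [b, ∞), the inequality ∫_b^∞ |ψ'(t)|² sinh(t) dt + α sinh(b) |ψ(b)|² ≥ (1/4) ∫_b^∞ |ψ(t)|² sinh(t) dt holds. -/
open Real MeasureTheory Set

/-- pointwise algebraic inequality -/
lemma key_ptwise (t p q : ℝ) (ht : 0 < t) :
    (Real.cosh t/(2*t) - Real.sinh t/(2*t^2) - Real.sinh t/2) * p^2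
      + (Real.sinh t/(2*t) - Real.cosh t/2) * (2*p*q) + (1/4) * (p^2 * Real.sinh t)
    ≤ q^2 * Real.sinh t := by
  have hs : 0 < Real.sinh t := Real.sinh_pos_iff.2 ht
  have hst : t < Real.sinh t := Real.self_lt_sinh_iff.2 ht
  have hc : Real.cosh t ^ 2 = 1 + Real.sinh t ^ 2 := Real.cosh_sq' t
  rw [← sub_nonneg]
  have hE : 0 ≤ 4*t^2*Real.sinh t*q^2 - (2*t*Real.cosh t - 2*Real.sinh t - 2*t^2*Real.sinh t)*p^2
      - (4*t*Real.sinh t - 4*t^2*Real.cosh t)*p*q - t^2*Real.sinh t*p^2 := by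
    have h0 : 0 < Real.sinh t := hs
    suffices h : 0 ≤ Real.sinh t * (4*t^2*Real.sinh t*q^2
        - (2*t*Real.cosh t - 2*Real.sinh t - 2*t^2*Real.sinh t)*p^2
        - (4*t*Real.sinh t - 4*t^2*Real.cosh t)*p*q - t^2*Real.sinh t*p^2) by
      exact nonneg_of_mul_nonneg_right h h0
    have hsq := sq_nonneg (2*t*Real.sinh t*q - (Real.sinh t - t*Real.cosh t)*p)
    have h2 : 0 ≤ (Real.sinh t - t)*(Real.sinh t + t)*p^2 :=
      mul_nonneg (mul_nonneg (by linarith) (by linarith)) (sq_nonneg p)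
    have hid2 : Real.sinh t * (4*t^2*Real.sinh t*q^2
        - (2*t*Real.cosh t - 2*Real.sinh t - 2*t^2*Real.sinh t)*p^2
        - (4*t*Real.sinh t - 4*t^2*Real.cosh t)*p*q - t^2*Real.sinh t*p^2)
        = (2*t*Real.sinh t*q - (Real.sinh t - t*Real.cosh t)*p)^2
          + (Real.sinh t - t)*(Real.sinh t + t)*p^2
          + t^2*(Real.sinh t^2 + 1 - Real.cosh t^2)*p^2 := by ring
    rw [hid2, hc]
    ring_nf
    nlinarith [hsq, h2]
  have hid : q^2 * Real.sinh t - ((Real.cosh t/(2*t) - Real.sinh t/(2*t^2) - Real.sinh t/2) * p^2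
      + (Real.sinh t/(2*t) - Real.cosh t/2) * (2*p*q) + (1/4) * (p^2 * Real.sinh t))
      = (4*t^2*Real.sinh t*q^2 - (2*t*Real.cosh t - 2*Real.sinh t - 2*t^2*Real.sinh t)*p^2
      - (4*t*Real.sinh t - 4*t^2*Real.cosh t)*p*q - t^2*Real.sinh t*p^2) / (4*t^2) := by
    field_simp
    ring
  rw [hid]
  positivity

/-- Weighted Poincaré-type inequality with boundary term, weight `sinh t`. -/
theorem stmt0 (b : ℝ) (hb : 0 < b) (α : ℝ)
    (hα : 1 / (2 * b) - Real.cosh b / Real.sinh b / 2 ≤ α)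
    (ψ : ℝ → ℝ) (hψ : ContDiff ℝ 1 ψ) (hsupp : HasCompactSupport ψ) :
    (1 / 4) * (∫ t in Ioi b, (ψ t) ^ 2 * Real.sinh t) ≤
      (∫ t in Ioi b, (deriv ψ t) ^ 2 * Real.sinh t) + α * Real.sinh b * (ψ b) ^ 2 := by
  have hψd : Differentiable ℝ ψ := hψ.differentiable one_ne_zero
  have hψc : Continuous ψ := hψ.continuous
  have hψ'c : Continuous (deriv ψ) := hψ.continuous_deriv le_rfl
  have hψ's : HasCompactSupport (deriv ψ) := hsupp.deriv
  set F : ℝ → ℝ := fun t => (Real.sinh t/(2*t) - Real.cosh t/2) * ψ t ^ 2 with hFdef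
  set F' : ℝ → ℝ := fun t => (Real.cosh t/(2*t) - Real.sinh t/(2*t^2) - Real.sinh t/2) * ψ t ^ 2
      + (Real.sinh t/(2*t) - Real.cosh t/2) * (2 * ψ t * deriv ψ t) with hF'def
  -- derivative
  have hder : ∀ x ∈ Ici b, HasDerivAt F (F' x) x := by
    intro x hx
    have hx0 : (0:ℝ) < x := lt_of_lt_of_le hb hx
    have h1 : HasDerivAt (fun t => Real.sinh t/(2*t) - Real.cosh t/2)
        (Real.cosh x/(2*x) - Real.sinh x/(2*x^2) - Real.sinh x/2) x := by
      have hden : HasDerivAt (fun t : ℝ => 2*t) 2 x := by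
        simpa using (hasDerivAt_id x).const_mul 2
      have hs : HasDerivAt (fun t : ℝ => Real.sinh t/(2*t))
          ((Real.cosh x * (2*x) - Real.sinh x * 2)/(2*x)^2) x :=
        (Real.hasDerivAt_sinh x).div hden (by positivity)
      have hc : HasDerivAt (fun t : ℝ => Real.cosh t/2) (Real.sinh x/2) x :=
        (Real.hasDerivAt_cosh x).div_const 2
      have hx' : x ≠ 0 := hx0.ne'
      exact (hs.sub hc).congr_deriv (by field_simp)
    have h2 : HasDerivAt (fun t => ψ t ^ 2) (2 * ψ x * deriv ψ x) x := by
      have h := ((hψd x).hasDerivAt).pow 2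
      simp at h
      exact h
    have := h1.mul h2
    exact this
  -- bound on support
  obtain ⟨M, hMb, hM⟩ : ∃ M, b ≤ M ∧ ∀ x, M < x → ψ x = 0 ∧ deriv ψ x = 0 := by
    obtain ⟨R, hR⟩ := (hsupp.isBounded).subset_closedBall 0
    obtain ⟨R', hR'⟩ := (hψ's.isBounded).subset_closedBall 0
    refine ⟨max b (max R R'), le_max_left _ _, fun x hx => ?_⟩
    have hxR : R < x := lt_of_le_of_lt ((le_max_left R R').trans (le_max_right b _)) hx
    have hxR' : R' < x := lt_of_le_of_lt ((le_max_right R R').trans (le_max_right b _)) hx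
    constructor
    · apply image_eq_zero_of_notMem_tsupport
      intro hmem
      have h1 := hR hmem
      simp only [Metric.mem_closedBall, Real.dist_eq, sub_zero] at h1
      have h2 : x ≤ R := (abs_le.1 h1).2
      linarith
    · apply image_eq_zero_of_notMem_tsupport
      intro hmem
      have h1 := hR' hmem
      simp only [Metric.mem_closedBall, Real.dist_eq, sub_zero] at h1
      have h2 : x ≤ R' := (abs_le.1 h1).2
      linarith
  -- tendsto
  have hFtend : Filter.Tendsto F Filter.atTop (nhds 0) := by
    apply Filter.Tendsto.congr' _ tendsto_const_nhds
    filter_upwards [Filter.eventually_gt_atTop M] with x hx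
    simp [hFdef, (hM x hx).1]
  -- integrability of compactly supported continuous integrands
  have hint1 : IntegrableOn (fun t => (deriv ψ t)^2 * Real.sinh t) (Ioi b) := by
    apply (Continuous.integrable_of_hasCompactSupport (by continuity) ?_).integrableOn
    apply hψ's.mono
    intro x hx
    simp only [Function.mem_support] at hx ⊢
    intro h0
    apply hx
    simp [h0]
  have hint2 : IntegrableOn (fun t => (ψ t)^2 * Real.sinh t) (Ioi b) := by
    apply (Continuous.integrable_of_hasCompactSupport (by continuity) ?_).integrableOn
    apply hsupp.mono
    intro x hx
    simp only [Function.mem_support] at hx ⊢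
    intro h0
    apply hx
    simp [h0]
  -- continuity of F'
  have hF'cont : ContinuousOn F' (Ici b) := by
    have hne : ∀ x ∈ Ici b, x ≠ 0 := fun x hx => ne_of_gt (lt_of_lt_of_le hb hx)
    apply ContinuousOn.add
    · apply ContinuousOn.mul _ (hψc.pow 2).continuousOn
      apply ContinuousOn.sub
      apply ContinuousOn.sub
      · exact Real.continuous_cosh.continuousOn.div
          (continuous_const.mul continuous_id).continuousOn
          (fun x hx => by have := lt_of_lt_of_le hb hx; positivity)
      · exact Real.continuous_sinh.continuousOn.div
          (continuous_const.mul (continuous_pow 2)).continuousOn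
          (fun x hx => by have := lt_of_lt_of_le hb hx; positivity)
      · exact (Real.continuous_sinh.div_const 2).continuousOn
    · apply ContinuousOn.mul
      · apply ContinuousOn.sub
        · exact Real.continuous_sinh.continuousOn.div
            (continuous_const.mul continuous_id).continuousOn
            (fun x hx => by have := lt_of_lt_of_le hb hx; positivity)
        · exact (Real.continuous_cosh.div_const 2).continuousOn
      · exact ((continuous_const.mul hψc).mul hψ'c).continuousOn
  -- integrability of F'
  have hF'int : IntegrableOn F' (Ioi b) := by
    rw [← Ioc_union_Ioi_eq_Ioi hMb]
    apply IntegrableOn.union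
    · exact ((hF'cont.mono (Icc_subset_Ici_self)).integrableOn_Icc).mono_set Ioc_subset_Icc_self
    · apply (integrableOn_congr_fun (g := fun _ => (0:ℝ)) ?_ measurableSet_Ioi).2
        (integrableOn_zero)
      intro x hx
      simp only [hF'def, (hM x hx).1, (hM x hx).2]
      ring
  -- FTC
  have hFTC : ∫ x in Ioi b, F' x = 0 - F b :=
    integral_Ioi_of_hasDerivAt_of_tendsto' hder hF'int hFtend
  -- pointwise comparison
  have hpt : ∀ x ∈ Ioi b, F' x + (1/4) * ((ψ x)^2 * Real.sinh x) ≤ (deriv ψ x)^2 * Real.sinh x := by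
    intro x hx
    have hx0 : (0:ℝ) < x := lt_trans hb hx
    exact key_ptwise x (ψ x) (deriv ψ x) hx0
  have hint3 : IntegrableOn (fun x => F' x + (1/4) * ((ψ x)^2 * Real.sinh x)) (Ioi b) :=
    hF'int.add (hint2.const_mul (1/4))
  have hmono : ∫ x in Ioi b, (F' x + (1/4) * ((ψ x)^2 * Real.sinh x))
      ≤ ∫ x in Ioi b, (deriv ψ x)^2 * Real.sinh x :=
    setIntegral_mono_on hint3 hint1 measurableSet_Ioi hpt
  rw [integral_add hF'int (hint2.const_mul (1/4)), hFTC, MeasureTheory.integral_const_mul] at hmono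
  -- boundary term
  have hsb : 0 < Real.sinh b := Real.sinh_pos_iff.2 hb
  have hbd : F b ≤ α * Real.sinh b * (ψ b)^2 := by
    have h := mul_le_mul_of_nonneg_right hα hsb.le
    have h2 : (1/(2*b) - Real.cosh b / Real.sinh b / 2) * Real.sinh b
        = Real.sinh b/(2*b) - Real.cosh b/2 := by
      field_simp
    rw [h2] at h
    calc F b = (Real.sinh b/(2*b) - Real.cosh b/2) * (ψ b)^2 := rfl
      _ ≤ (α * Real.sinh b) * (ψ b)^2 := mul_le_mul_of_nonneg_right h (sq_nonneg _)
      _ = α * Real.sinh b * (ψ b)^2 := by ring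
  linarith
end

section
/- For every b > 0, every real α ≥ -1/2, and every continuously differentiable compactly supported function ψ on [b, ∞), the inequality ∫_b^∞ |ψ'(t)|² e^t dt + α e^b |ψ(b)|² ≥ (1/4) ∫_b^∞ |ψ(t)|² e^t dt holds. -/
open Real MeasureTheory Set Filter

/-- Weighted Poincaré-type inequality with boundary term, weight `e^t`. -/
theorem stmt1 (b : ℝ) (hb : 0 < b) (α : ℝ) (hα : -(1/2 : ℝ) ≤ α)
    (ψ : ℝ → ℝ) (hψ : ContDiff ℝ 1 ψ) (hsupp : HasCompactSupport ψ) :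
    (1 / 4) * (∫ t in Ioi b, (ψ t) ^ 2 * Real.exp t) ≤
      (∫ t in Ioi b, (deriv ψ t) ^ 2 * Real.exp t) + α * Real.exp b * (ψ b) ^ 2 := by
  have hd : Differentiable ℝ ψ := hψ.differentiable one_ne_zero
  have hc : Continuous ψ := hψ.continuous
  have hdc : Continuous (deriv ψ) := hψ.continuous_deriv le_rfl
  have hds : HasCompactSupport (deriv ψ) := hsupp.deriv
  have hint : ∀ (g : ℝ → ℝ), Continuous g → HasCompactSupport g →
      IntegrableOn (fun t => g t * Real.exp t) (Ioi b) := fun g hg hgs =>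
    ((hg.mul Real.continuous_exp).integrable_of_hasCompactSupport
      (hgs.mul_right)).integrableOn
  have hA : IntegrableOn (fun t => (deriv ψ t) ^ 2 * Real.exp t) (Ioi b) := by
    have := hint (fun t => deriv ψ t * deriv ψ t) (hdc.mul hdc) hds.mul_right
    simpa [sq] using this
  have hB : IntegrableOn (fun t => ψ t * deriv ψ t * Real.exp t) (Ioi b) :=
    hint (fun t => ψ t * deriv ψ t) (hc.mul hdc) hsupp.mul_right
  have hC : IntegrableOn (fun t => ψ t ^ 2 * Real.exp t) (Ioi b) := by
    have := hint (fun t => ψ t * ψ t) (hc.mul hc) hsupp.mul_right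
    simpa [sq] using this
  -- FTC on f(t) = ψ(t)^2 * exp t
  have hderivF : ∀ t ∈ Ioi b, HasDerivAt (fun t => ψ t ^ 2 * Real.exp t)
      (2 * (ψ t * deriv ψ t * Real.exp t) + ψ t ^ 2 * Real.exp t) t := by
    intro t _
    have h1 : HasDerivAt (fun x => ψ x ^ 2) (2 * ψ t ^ 1 * deriv ψ t) t :=
      ((hd t).hasDerivAt).pow 2
    have h2 : HasDerivAt (fun x => ψ x ^ 2 * Real.exp x)
        (2 * ψ t ^ 1 * deriv ψ t * Real.exp t + ψ t ^ 2 * Real.exp t) t :=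
      h1.mul (Real.hasDerivAt_exp t)
    convert h2 using 1
    ring
  obtain ⟨R, hR⟩ := hsupp.bddAbove
  have htend : Tendsto (fun t => ψ t ^ 2 * Real.exp t) atTop (nhds 0) := by
    apply tendsto_const_nhds.congr'
    filter_upwards [eventually_gt_atTop R] with t ht
    have hz : ψ t = 0 := by
      by_contra h
      exact absurd (hR (subset_tsupport ψ h)) (not_le.mpr ht)
    simp [hz]
  have hFTC : ∫ t in Ioi b, (2 * (ψ t * deriv ψ t * Real.exp t) + ψ t ^ 2 * Real.exp t)
      = 0 - ψ b ^ 2 * Real.exp b :=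
    MeasureTheory.integral_Ioi_of_hasDerivAt_of_tendsto
      ((hc.pow 2).mul Real.continuous_exp).continuousWithinAt
      hderivF ((hB.const_mul 2).add hC) htend
  rw [integral_add (hB.const_mul 2) hC, integral_const_mul] at hFTC
  -- nonnegativity of ∫ (2ψ' + ψ)^2 e^t
  have key : (0:ℝ) ≤ ∫ t in Ioi b, (2 * deriv ψ t + ψ t) ^ 2 * Real.exp t :=
    setIntegral_nonneg measurableSet_Ioi fun t _ =>
      mul_nonneg (sq_nonneg _) (Real.exp_pos t).le
  have expand : (fun t => (2 * deriv ψ t + ψ t) ^ 2 * Real.exp t) =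
      fun t => 4 * ((deriv ψ t) ^ 2 * Real.exp t) +
        (4 * (ψ t * deriv ψ t * Real.exp t) + ψ t ^ 2 * Real.exp t) := by
    funext t; ring
  have hBC : IntegrableOn (fun t => 4 * (ψ t * deriv ψ t * Real.exp t) + ψ t ^ 2 * Real.exp t)
      (Ioi b) := (hB.const_mul 4).add hC
  rw [expand, integral_add (hA.const_mul 4) hBC] at key
  rw [integral_add (hB.const_mul 4) hC, integral_const_mul, integral_const_mul] at key
  have hE : (0:ℝ) ≤ ψ b ^ 2 * Real.exp b :=
    mul_nonneg (sq_nonneg _) (Real.exp_pos b).le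
  nlinarith [mul_le_mul_of_nonneg_right hα hE]
end

section
/- For every b ≥ 0, every real α ≥ -(1/2) tanh(b), and every continuously differentiable compactly supported function ψ on [b, ∞), the inequality ∫_b^∞ |ψ'(t)|² cosh(t) dt + α cosh(b) |ψ(b)|² ≥ (1/4) ∫_b^∞ |ψ(t)|² cosh(t) dt holds. -/
open Real MeasureTheory Set

/-- Weighted Poincaré-type inequality with boundary term, weight `cosh t`. -/
theorem stmt2 (b : ℝ) (hb : 0 ≤ b) (α : ℝ) (hα : -(1/2 : ℝ) * Real.tanh b ≤ α)
    (ψ : ℝ → ℝ) (hψ : ContDiff ℝ 1 ψ) (hsupp : HasCompactSupport ψ) :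
    (1 / 4) * (∫ t in Ioi b, (ψ t) ^ 2 * Real.cosh t) ≤
      (∫ t in Ioi b, (deriv ψ t) ^ 2 * Real.cosh t) + α * Real.cosh b * (ψ b) ^ 2 := by
  have hψc : Continuous ψ := hψ.continuous
  have hψ'c : Continuous (deriv ψ) := hψ.continuous_deriv le_rfl
  have hψd : Differentiable ℝ ψ := hψ.differentiable one_ne_zero
  -- compact supports
  have hs1 : HasCompactSupport fun t => (deriv ψ t) ^ 2 * Real.cosh t :=
    ((hsupp.deriv).comp_left (g := fun x : ℝ => x ^ 2) (by simp)).mul_right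
  have hs2 : HasCompactSupport fun t => ψ t * deriv ψ t * Real.sinh t :=
    (hsupp.mul_right).mul_right
  have hs3 : HasCompactSupport fun t => (ψ t) ^ 2 * Real.cosh t :=
    ((hsupp.comp_left (g := fun x : ℝ => x ^ 2) (by simp))).mul_right
  -- integrability
  have h1 : IntegrableOn (fun t => (deriv ψ t) ^ 2 * Real.cosh t) (Ioi b) :=
    (((hψ'c.pow 2).mul Real.continuous_cosh).integrable_of_hasCompactSupport hs1).integrableOn
  have h2 : IntegrableOn (fun t => ψ t * deriv ψ t * Real.sinh t) (Ioi b) :=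
    (((hψc.mul hψ'c).mul Real.continuous_sinh).integrable_of_hasCompactSupport hs2).integrableOn
  have h3 : IntegrableOn (fun t => (ψ t) ^ 2 * Real.cosh t) (Ioi b) :=
    (((hψc.pow 2).mul Real.continuous_cosh).integrable_of_hasCompactSupport hs3).integrableOn
  -- ψ vanishes at infinity
  obtain ⟨r, hr⟩ := hsupp.isBounded.subset_closedBall 0
  have hzero : ∀ t : ℝ, r < t → ψ t = 0 := by
    intro t ht
    apply image_eq_zero_of_notMem_tsupport
    intro hmem
    have := hr hmem
    simp only [Metric.mem_closedBall, Real.dist_eq, sub_zero] at this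
    have := le_abs_self t
    linarith
  -- integration by parts : ∫ (ψ² sinh)' = - ψ(b)² sinh b
  have key : (∫ t in Ioi b, (2 * ψ t * deriv ψ t * Real.sinh t + (ψ t) ^ 2 * Real.cosh t)) =
      0 - (ψ b) ^ 2 * Real.sinh b := by
    refine MeasureTheory.integral_Ioi_of_hasDerivAt_of_tendsto
      (f := fun t => (ψ t) ^ 2 * Real.sinh t)
      (((hψc.pow 2).mul Real.continuous_sinh).continuousWithinAt) ?_ ?_ ?_
    · intro x hx
      have h := (((hψd x).hasDerivAt.fun_pow 2).fun_mul (Real.hasDerivAt_sinh x))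
      convert h using 1
      · rfl
      push_cast
      ring
    · apply Integrable.integrableOn
      have : Continuous fun t => 2 * ψ t * deriv ψ t * Real.sinh t + (ψ t) ^ 2 * Real.cosh t := by
        continuity
      apply this.integrable_of_hasCompactSupport
      apply HasCompactSupport.add
      · exact ((hsupp.mul_left).mul_right).mul_right
      · exact hs3
    · apply Filter.Tendsto.congr' _ tendsto_const_nhds
      filter_upwards [Filter.eventually_gt_atTop r] with t ht
      simp [hzero t ht]
  have key2 : (∫ t in Ioi b, ψ t * deriv ψ t * Real.sinh t) =
      (- (ψ b) ^ 2 * Real.sinh b - ∫ t in Ioi b, (ψ t) ^ 2 * Real.cosh t) / 2 := by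
    have hsplit : (∫ t in Ioi b, (2 * ψ t * deriv ψ t * Real.sinh t + (ψ t) ^ 2 * Real.cosh t)) =
        2 * (∫ t in Ioi b, ψ t * deriv ψ t * Real.sinh t) +
          ∫ t in Ioi b, (ψ t) ^ 2 * Real.cosh t := by
      have e : (fun t => 2 * ψ t * deriv ψ t * Real.sinh t)
          = fun t => 2 * (ψ t * deriv ψ t * Real.sinh t) := by ext t; ring
      rw [show (fun t => 2 * ψ t * deriv ψ t * Real.sinh t + (ψ t) ^ 2 * Real.cosh t)
          = fun t => 2 * (ψ t * deriv ψ t * Real.sinh t) + (ψ t) ^ 2 * Real.cosh t by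
            ext t; ring,
        MeasureTheory.integral_add (h2.const_mul 2) h3, MeasureTheory.integral_const_mul]
    rw [hsplit] at key
    linarith
  -- pointwise nonnegativity of the expanded square
  have hpt : ∀ t ∈ Ioi b, 0 ≤ (deriv ψ t) ^ 2 * Real.cosh t + ψ t * deriv ψ t * Real.sinh t
      + (1 / 4) * ((ψ t) ^ 2 * Real.cosh t) := by
    intro t _
    have hc : 0 < Real.cosh t := Real.cosh_pos t
    have hcs : Real.cosh t ^ 2 - Real.sinh t ^ 2 = 1 := Real.cosh_sq_sub_sinh_sq t
    nlinarith [sq_nonneg (2 * deriv ψ t * Real.cosh t + ψ t * Real.sinh t), sq_nonneg (ψ t),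
      mul_pos hc hc]
  have hint : 0 ≤ (∫ t in Ioi b, (deriv ψ t) ^ 2 * Real.cosh t)
      + (∫ t in Ioi b, ψ t * deriv ψ t * Real.sinh t)
      + (1 / 4) * (∫ t in Ioi b, (ψ t) ^ 2 * Real.cosh t) := by
    have := MeasureTheory.setIntegral_nonneg (μ := volume) (measurableSet_Ioi (a := b)) hpt
    have h12 : IntegrableOn
        (fun t => (deriv ψ t) ^ 2 * Real.cosh t + ψ t * deriv ψ t * Real.sinh t) (Ioi b) :=
      h1.add h2
    have h3' : IntegrableOn (fun t => (1 / 4 : ℝ) * ((ψ t) ^ 2 * Real.cosh t)) (Ioi b) :=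
      h3.const_mul _
    rw [MeasureTheory.integral_add h12 h3',
      MeasureTheory.integral_add h1 h2, MeasureTheory.integral_const_mul] at this
    linarith
  -- boundary term estimate
  have hbd : -(1/2) * Real.sinh b * (ψ b) ^ 2 ≤ α * Real.cosh b * (ψ b) ^ 2 := by
    have hc : 0 < Real.cosh b := Real.cosh_pos b
    have htanh : Real.tanh b * Real.cosh b = Real.sinh b := by
      rw [Real.tanh_eq_sinh_div_cosh]; field_simp
    nlinarith [sq_nonneg (ψ b), mul_le_mul_of_nonneg_right hα
      (mul_nonneg hc.le (sq_nonneg (ψ b)))]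
  rw [key2] at hint
  linarith
end

section
/- For every b > 0 and every continuously differentiable compactly supported function f on [b,∞), the substitution g(t) = √t f(t) yields the identity ∫_b^∞ |f'(t)|² t dt = ∫_b^∞ |g'(t)|² dt + (1/(2b))|g(b)|² - (1/4)∫_b^∞ |g(t)|²/t² dt; in particular ∫_b^∞ |g'(t)|² dt + (1/(2b))|g(b)|² - (1/4)∫_b^∞ |g(t)|²/t² dt ≥ 0. -/
open Real MeasureTheory Set

private lemma integrableOn_helper {h : ℝ → ℝ} {b M : ℝ} (hbM : b ≤ M)
    (hcont : ContinuousOn h (Icc b M)) (h0 : ∀ t, M < t → h t = 0) :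
    IntegrableOn h (Ioi b) := by
  rw [← Ioc_union_Ioi_eq_Ioi hbM]
  refine ((hcont.integrableOn_compact isCompact_Icc).mono_set Ioc_subset_Icc_self).union ?_
  have hEq : EqOn h 0 (Ioi M) := fun t ht => h0 t ht
  exact (integrableOn_congr_fun hEq measurableSet_Ioi).mpr integrableOn_zero

private lemma normsq_expand (s : ℝ) (hs : 0 < s) (v u : ℂ) :
    ‖((1/(2*s) : ℝ) : ℂ) * v + ((s : ℝ) : ℂ) * u‖ ^ 2
      = (1/(4*s^2)) * ‖v‖^2 + (v * (starRingEnd ℂ) u).re + s^2 * ‖u‖^2 := by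
  have h1 : ∀ z : ℂ, ‖z‖^2 = Complex.normSq z := fun z => by
    rw [Complex.sq_norm]
  rw [h1, h1, h1, Complex.normSq_add]
  have hcross : (((1/(2*s) : ℝ) : ℂ) * v) * (starRingEnd ℂ) (((s : ℝ) : ℂ) * u)
      = (((1/(2*s)*s : ℝ)) : ℂ) * (v * (starRingEnd ℂ) u) := by
    simp only [map_mul, Complex.conj_ofReal, Complex.ofReal_mul]
    ring
  rw [hcross]
  simp only [Complex.normSq_mul, Complex.normSq_ofReal, Complex.re_ofReal_mul]
  have hs' : s ≠ 0 := hs.ne'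
  field_simp
  ring

private lemma re_mul_conj_comm (z w : ℂ) :
    (z * (starRingEnd ℂ) w).re = (w * (starRingEnd ℂ) z).re := by
  simp [Complex.mul_re]; ring

/-- The substitution `g(t) = √t f(t)` identity and the resulting nonnegativity. -/
theorem stmt3 (b : ℝ) (hb : 0 < b) (f : ℝ → ℂ) (hf : ContDiff ℝ 1 f)
    (hsupp : HasCompactSupport f) (g : ℝ → ℂ)
    (hg : g = fun t => (Real.sqrt t : ℂ) * f t) :
    (∫ t in Ioi b, ‖deriv f t‖ ^ 2 * t)
        = (∫ t in Ioi b, ‖deriv g t‖ ^ 2) + (1 / (2 * b)) * ‖g b‖ ^ 2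
          - (1 / 4) * (∫ t in Ioi b, ‖g t‖ ^ 2 / t ^ 2) ∧
    0 ≤ (∫ t in Ioi b, ‖deriv g t‖ ^ 2) + (1 / (2 * b)) * ‖g b‖ ^ 2
          - (1 / 4) * (∫ t in Ioi b, ‖g t‖ ^ 2 / t ^ 2) := by
  have hfd : Differentiable ℝ f := hf.differentiable one_ne_zero
  have hfc : Continuous f := hfd.continuous
  have hf'c : Continuous (deriv f) := hf.continuous_deriv le_rfl
  -- a bound beyond which f and deriv f vanish
  obtain ⟨M0, hM0⟩ := hsupp.isCompact.bddAbove
  set M : ℝ := max M0 b with hM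
  have hbM : b ≤ M := le_max_right _ _
  have hfz : ∀ t, M < t → f t = 0 := by
    intro t ht
    apply image_eq_zero_of_notMem_tsupport
    intro hmem
    exact absurd (hM0 hmem) (not_le.mpr (lt_of_le_of_lt (le_max_left M0 b) ht))
  have hf'z : ∀ t, M < t → deriv f t = 0 := by
    intro t ht
    by_contra h
    exact absurd (hM0 (support_deriv_subset h))
      (not_le.mpr (lt_of_le_of_lt (le_max_left M0 b) ht))
  -- the explicit derivative of g on (0, ∞)
  set G : ℝ → ℂ := fun t =>
    ((1/(2*Real.sqrt t) : ℝ) : ℂ) * f t + ((Real.sqrt t : ℝ) : ℂ) * deriv f t with hGdef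
  have hderivg : ∀ t : ℝ, 0 < t → HasDerivAt g (G t) t := by
    intro t ht
    have h1 : HasDerivAt (fun s : ℝ => ((Real.sqrt s : ℝ) : ℂ)) ((1/(2*Real.sqrt t) : ℝ) : ℂ) t :=
      (Real.hasDerivAt_sqrt ht.ne').ofReal_comp
    have h2 : HasDerivAt f (deriv f t) t := (hfd t).hasDerivAt
    have := h1.mul h2
    rw [hg]
    exact this
  have hgderiv_eq : ∀ t ∈ Ioi b, deriv g t = G t := fun t ht =>
    (hderivg t (hb.trans ht)).deriv
  -- positivity facts on Icc b M
  have hpos : ∀ t ∈ Icc b M, 0 < t := fun t ht => lt_of_lt_of_le hb ht.1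
  -- continuity of G on (0,∞)
  have hGcont : ContinuousOn G (Icc b M) := by
    apply ContinuousOn.add
    · apply ContinuousOn.mul _ hfc.continuousOn
      apply Continuous.comp_continuousOn Complex.continuous_ofReal
      apply ContinuousOn.div continuousOn_const
      · exact (continuous_const.mul Real.continuous_sqrt).continuousOn
      · intro t ht
        have h0 := hpos t ht
        positivity
    · exact ((Complex.continuous_ofReal.comp Real.continuous_sqrt).mul hf'c).continuousOn
  -- integrability of the four pieces
  have hint1 : IntegrableOn (fun t => ‖deriv f t‖ ^ 2 * t) (Ioi b) := by
    apply integrableOn_helper hbM (Continuous.continuousOn (by fun_prop))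
    intro t ht; rw [hf'z t ht]; simp
  have hint2 : IntegrableOn (fun t => ‖G t‖ ^ 2) (Ioi b) := by
    apply integrableOn_helper hbM ((hGcont.norm.pow 2))
    intro t ht
    rw [hGdef]
    simp [hfz t ht, hf'z t ht]
  have hint3 : IntegrableOn (fun t => ‖g t‖ ^ 2 / t ^ 2) (Ioi b) := by
    apply integrableOn_helper hbM
    · apply ContinuousOn.div
      · exact ((show Continuous g from hg ▸ ((Complex.continuous_ofReal.comp Real.continuous_sqrt).mul hfc : Continuous (fun t => (Real.sqrt t : ℂ) * f t))).norm.pow 2).continuousOn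
      · fun_prop
      · intro t ht
        have h0 := hpos t ht
        positivity
    · intro t ht; rw [hg]; simp [hfz t ht]
  have hint4 : IntegrableOn (fun t => (f t * (starRingEnd ℂ) (deriv f t)).re) (Ioi b) := by
    apply integrableOn_helper hbM (Continuous.continuousOn (by fun_prop))
    intro t ht; simp [hfz t ht]
  -- FTC for the cross term
  have hF : ∀ t : ℝ, HasDerivAt (fun t => (f t * (starRingEnd ℂ) (f t)).re)
      (2 * (f t * (starRingEnd ℂ) (deriv f t)).re) t := by
    intro t
    have h2 : HasDerivAt f (deriv f t) t := (hfd t).hasDerivAt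
    have hconj : HasDerivAt (fun t => (starRingEnd ℂ) (f t)) ((starRingEnd ℂ) (deriv f t)) t := by
      have := (Complex.conjCLE.toContinuousLinearMap.hasFDerivAt
        (x := f t)).comp_hasDerivAt t h2
      exact this
    have hmul := h2.mul hconj
    have hre := (Complex.reCLM.hasFDerivAt
      (x := f t * (starRingEnd ℂ) (f t))).comp_hasDerivAt t hmul
    refine hre.congr_deriv ?_
    simp only [Complex.reCLM_apply, Complex.add_re]
    rw [re_mul_conj_comm (deriv f t) (f t)]
    ring
  have hFTC : (∫ t in Ioi b, 2 * (f t * (starRingEnd ℂ) (deriv f t)).re)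
      = 0 - (f b * (starRingEnd ℂ) (f b)).re := by
    apply integral_Ioi_of_hasDerivAt_of_tendsto
    · exact (Continuous.continuousWithinAt (by fun_prop))
    · exact fun x _ => hF x
    · exact (hint4.const_mul 2)
    · apply Filter.Tendsto.congr' _ tendsto_const_nhds
      filter_upwards [Filter.eventually_gt_atTop M] with t ht
      simp [hfz t ht]
  have hI4 : (∫ t in Ioi b, (f t * (starRingEnd ℂ) (deriv f t)).re)
      = -(1/2) * ‖f b‖ ^ 2 := by
    have h2 : (∫ t in Ioi b, 2 * (f t * (starRingEnd ℂ) (deriv f t)).re)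
        = 2 * ∫ t in Ioi b, (f t * (starRingEnd ℂ) (deriv f t)).re :=
      integral_const_mul 2 _
    have hnorm : (f b * (starRingEnd ℂ) (f b)).re = ‖f b‖ ^ 2 := by
      rw [Complex.mul_conj]
      simp [Complex.sq_norm]
    rw [h2, hnorm] at hFTC
    linarith
  -- the pointwise identity on Ioi b
  have hpt : ∀ t ∈ Ioi b, ‖deriv f t‖ ^ 2 * t
      = ‖G t‖ ^ 2 - (1/4) * (‖g t‖ ^ 2 / t ^ 2)
        - (f t * (starRingEnd ℂ) (deriv f t)).re := by
    intro t ht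
    have htpos : 0 < t := hb.trans ht
    have hs : 0 < Real.sqrt t := Real.sqrt_pos.mpr htpos
    have hsq : Real.sqrt t ^ 2 = t := Real.sq_sqrt htpos.le
    have hGnorm := normsq_expand (Real.sqrt t) hs (f t) (deriv f t)
    have hgnorm : ‖g t‖ ^ 2 = t * ‖f t‖ ^ 2 := by
      rw [hg]
      simp only [norm_mul, mul_pow, Complex.norm_real, Real.norm_eq_abs,
        abs_of_nonneg (Real.sqrt_nonneg t), hsq]
    rw [hGdef]
    rw [hGnorm, hsq, hgnorm]
    field_simp
    ring
  -- replace deriv g by G in the integral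
  have hI2eq : (∫ t in Ioi b, ‖deriv g t‖ ^ 2) = ∫ t in Ioi b, ‖G t‖ ^ 2 := by
    apply setIntegral_congr_fun measurableSet_Ioi
    intro t ht
    show ‖deriv g t‖ ^ 2 = ‖G t‖ ^ 2
    rw [hgderiv_eq t ht]
  -- main integral identity
  have hmain : (∫ t in Ioi b, ‖deriv f t‖ ^ 2 * t)
      = (∫ t in Ioi b, ‖G t‖ ^ 2) - (1/4) * (∫ t in Ioi b, ‖g t‖ ^ 2 / t ^ 2)
        - (∫ t in Ioi b, (f t * (starRingEnd ℂ) (deriv f t)).re) := by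
    have hcongr : (∫ t in Ioi b, ‖deriv f t‖ ^ 2 * t)
        = ∫ t in Ioi b, (‖G t‖ ^ 2 - (1/4) * (‖g t‖ ^ 2 / t ^ 2)
            - (f t * (starRingEnd ℂ) (deriv f t)).re) :=
      setIntegral_congr_fun measurableSet_Ioi hpt
    rw [hcongr, integral_sub (by exact (hint2.sub (hint3.const_mul (1/4)))) hint4,
      integral_sub hint2 (hint3.const_mul (1/4)), integral_const_mul]
  -- boundary value
  have hgb : (1 / (2 * b)) * ‖g b‖ ^ 2 = (1/2) * ‖f b‖ ^ 2 := by
    have : ‖g b‖ ^ 2 = b * ‖f b‖ ^ 2 := by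
      rw [hg]
      simp only [norm_mul, mul_pow, Complex.norm_real, Real.norm_eq_abs,
        abs_of_nonneg (Real.sqrt_nonneg b), Real.sq_sqrt hb.le]
    rw [this]
    field_simp
  have key : (∫ t in Ioi b, ‖deriv f t‖ ^ 2 * t)
      = (∫ t in Ioi b, ‖deriv g t‖ ^ 2) + (1 / (2 * b)) * ‖g b‖ ^ 2
        - (1 / 4) * (∫ t in Ioi b, ‖g t‖ ^ 2 / t ^ 2) := by
    rw [hI2eq, hgb, hmain, hI4]
    ring
  refine ⟨key, ?_⟩
  rw [← key]
  apply setIntegral_nonneg measurableSet_Ioi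
  intro t ht
  have : 0 < t := hb.trans ht
  positivity
end

section
/- For every b ≥ 0 and every continuously differentiable compactly supported function ψ on [b,∞), setting φ(t) = √(cosh t) ψ(t), one has ∫_b^∞ |ψ'(t)|² cosh(t) dt = ∫_b^∞ |φ'(t)|² dt + (tanh(b)/2)|φ(b)|² + (1/4)∫_b^∞ (1 + 1/cosh²(t)) |φ(t)|² dt. -/
open Real MeasureTheory Set

private lemma sq_norm_combo (a c : ℝ) (z z' : ℂ) :
    ‖(a : ℂ) * z + (c : ℂ) * z'‖ ^ 2
      = a ^ 2 * ‖z‖ ^ 2 + 2 * a * c * (z.re * z'.re + z.im * z'.im) + c ^ 2 * ‖z'‖ ^ 2 := by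
  simp only [Complex.sq_norm, Complex.normSq_apply, Complex.add_re,
    Complex.add_im, Complex.mul_re, Complex.mul_im, Complex.ofReal_re, Complex.ofReal_im]
  ring

private lemma sq_norm_one (a : ℝ) (z : ℂ) :
    ‖(a : ℂ) * z‖ ^ 2 = a ^ 2 * ‖z‖ ^ 2 := by
  simp only [Complex.sq_norm, Complex.normSq_apply, Complex.mul_re,
    Complex.mul_im, Complex.ofReal_re, Complex.ofReal_im]
  ring

/-- The substitution `φ(t) = √(cosh t) ψ(t)` identity for the weight `cosh t`. -/
theorem stmt7 (b : ℝ) (hb : 0 ≤ b) (ψ : ℝ → ℂ) (hψ : ContDiff ℝ 1 ψ)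
    (hsupp : HasCompactSupport ψ) (φ : ℝ → ℂ)
    (hφ : φ = fun t => (Real.sqrt (Real.cosh t) : ℂ) * ψ t) :
    (∫ t in Ioi b, ‖deriv ψ t‖ ^ 2 * Real.cosh t)
        = (∫ t in Ioi b, ‖deriv φ t‖ ^ 2)
          + (Real.tanh b / 2) * ‖φ b‖ ^ 2
          + (1 / 4) * (∫ t in Ioi b,
              (1 + 1 / (Real.cosh t) ^ 2) * ‖φ t‖ ^ 2) := by
  have hψd : ∀ t, HasDerivAt ψ (deriv ψ t) t := fun t =>
    (hψ.differentiable one_ne_zero t).hasDerivAt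
  have hψc : Continuous ψ := hψ.continuous
  have hψd_cont : Continuous (deriv ψ) := (hψ.iterate_deriv' 0 1).continuous
  have hcosh_pos : ∀ t : ℝ, 0 < Real.cosh t := Real.cosh_pos
  set w : ℝ → ℝ := fun t => Real.sqrt (Real.cosh t) with hw_def
  set w' : ℝ → ℝ := fun t => Real.sinh t / (2 * Real.sqrt (Real.cosh t)) with hw'_def
  have hw_pos : ∀ t, 0 < w t := fun t => Real.sqrt_pos.mpr (hcosh_pos t)
  have hw_sq : ∀ t, w t ^ 2 = Real.cosh t := fun t =>
    Real.sq_sqrt (hcosh_pos t).le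
  have hwd : ∀ t, HasDerivAt w (w' t) t := by
    intro t
    have h1 : HasDerivAt Real.cosh (Real.sinh t) t := Real.hasDerivAt_cosh t
    have h2 : HasDerivAt Real.sqrt (1 / (2 * Real.sqrt (Real.cosh t))) (Real.cosh t) :=
      Real.hasDerivAt_sqrt (hcosh_pos t).ne'
    have := h2.comp t h1
    exact this.congr_deriv (by show _ = Real.sinh t / (2 * Real.sqrt (Real.cosh t)); ring)
  have hw_cont : Continuous w := by
    fun_prop
  have hw'_cont : Continuous w' := by
    apply Continuous.div Real.continuous_sinh (by fun_prop)
    intro t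
    have := hw_pos t
    positivity
  -- derivative of φ
  have hφd : ∀ t, HasDerivAt φ ((w' t : ℂ) * ψ t + (w t : ℂ) * deriv ψ t) t := by
    intro t
    rw [hφ]
    exact ((hwd t).ofReal_comp.mul (hψd t))
  have hφderiv : ∀ t, deriv φ t = (w' t : ℂ) * ψ t + (w t : ℂ) * deriv ψ t := fun t =>
    (hφd t).deriv
  -- derivative of ‖ψ t‖²
  set D : ℝ → ℝ := fun t => (ψ t).re * (deriv ψ t).re + (ψ t).im * (deriv ψ t).im with hD_def
  have hD_cont : Continuous D := by
    apply Continuous.add <;> apply Continuous.mul <;> fun_prop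
  have hNd : ∀ t, HasDerivAt (fun t => ‖ψ t‖ ^ 2) (2 * D t) t := by
    intro t
    have hre : ∀ s, HasDerivAt (fun u => (ψ u).re) ((deriv ψ s).re) s := fun s =>
      (Complex.reCLM.hasFDerivAt.comp_hasDerivAt s (hψd s))
    have him : ∀ s, HasDerivAt (fun u => (ψ u).im) ((deriv ψ s).im) s := fun s =>
      (Complex.imCLM.hasFDerivAt.comp_hasDerivAt s (hψd s))
    have h : HasDerivAt (fun u => (ψ u).re * (ψ u).re + (ψ u).im * (ψ u).im)
        ((deriv ψ t).re * (ψ t).re + (ψ t).re * (deriv ψ t).re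
          + ((deriv ψ t).im * (ψ t).im + (ψ t).im * (deriv ψ t).im)) t :=
      ((hre t).mul (hre t)).add ((him t).mul (him t))
    have heq : (fun u => ‖ψ u‖ ^ 2) = fun u => (ψ u).re * (ψ u).re + (ψ u).im * (ψ u).im := by
      funext u
      simp [Complex.sq_norm, Complex.normSq_apply]
    rw [heq]
    convert h using 1
    simp [hD_def]; ring
  -- the boundary function F
  set F : ℝ → ℝ := fun t => Real.sinh t / 2 * ‖ψ t‖ ^ 2 with hF_def
  set F' : ℝ → ℝ := fun t => Real.cosh t / 2 * ‖ψ t‖ ^ 2 + Real.sinh t / 2 * (2 * D t)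
    with hF'_def
  have hFd : ∀ t, HasDerivAt F (F' t) t := fun t =>
    ((Real.hasDerivAt_sinh t).div_const 2).mul (hNd t)
  have hF'_cont : Continuous F' := by
    apply Continuous.add
    · exact ((Real.continuous_cosh.div_const 2).mul (by fun_prop))
    · exact ((Real.continuous_sinh.div_const 2).mul (continuous_const.mul hD_cont))
  -- compact support facts
  have hsupp_d : HasCompactSupport (deriv ψ) := hsupp.deriv
  have hN_supp : HasCompactSupport (fun t => ‖ψ t‖ ^ 2) :=
    hsupp.comp_left (g := fun z : ℂ => ‖z‖ ^ 2) (by simp)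
  have hF'_supp : HasCompactSupport F' := by
    apply HasCompactSupport.add
    · exact HasCompactSupport.mul_left hN_supp
    · apply HasCompactSupport.mul_left
      apply HasCompactSupport.mul_left
      apply HasCompactSupport.add
      · exact (hsupp.comp_left (g := Complex.re) (by simp)).mul_right
      · exact (hsupp.comp_left (g := Complex.im) (by simp)).mul_right
  have hF'_int : IntegrableOn F' (Ioi b) := 
    (hF'_cont.integrable_of_hasCompactSupport hF'_supp).integrableOn
  -- F tends to 0 at top
  have hF_top : Filter.Tendsto F Filter.atTop (nhds 0) := by
    obtain ⟨r, hr⟩ := hsupp.isCompact.bddAbove.imp fun r hr => hr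
    have : ∀ᶠ t in Filter.atTop, F t = 0 := by
      filter_upwards [Filter.eventually_gt_atTop r] with t ht
      have : ψ t = 0 := by
        apply image_eq_zero_of_notMem_tsupport
        intro hmem
        exact absurd (hr hmem) (not_le.mpr ht)
      simp [hF_def, this]
    exact Filter.Tendsto.congr' (this.mono fun t ht => ht.symm) tendsto_const_nhds
  -- integration by parts on Ioi b
  have hIBP : ∫ t in Ioi b, F' t = 0 - F b := by
    apply integral_Ioi_of_hasDerivAt_of_tendsto
    · exact ((hFd b).continuousAt).continuousWithinAt
    · exact fun x _ => hFd x
    · exact hF'_int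
    · exact hF_top
  -- pointwise key identity
  have key : ∀ t, ‖deriv ψ t‖ ^ 2 * Real.cosh t
      = ‖deriv φ t‖ ^ 2 + (1 / 4) * ((1 + 1 / (Real.cosh t) ^ 2) * ‖φ t‖ ^ 2) - F' t := by
    intro t
    have hc := hcosh_pos t
    have hw0 := (hw_pos t).ne'
    have hws := hw_sq t
    have hw' : w' t = Real.sinh t / (2 * w t) := rfl
    have e1 : w' t ^ 2 = (Real.cosh t ^ 2 - 1) / (4 * Real.cosh t) := by
      rw [hw', div_pow, mul_pow, hws, Real.sinh_sq]
      norm_num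
    have e2 : 2 * w' t * w t = Real.sinh t := by
      rw [hw']
      field_simp
    rw [hφderiv t, sq_norm_combo, hφ]
    simp only [sq_norm_one, hF'_def]
    rw [e1, e2]
    rw [hws]
    simp only [hD_def]
    field_simp
    ring
  -- integrability of the pieces
  have hint1 : IntegrableOn (fun t => ‖deriv φ t‖ ^ 2) (Ioi b) := by
    have hsupp_φd : HasCompactSupport (fun t => (w' t : ℂ) * ψ t + (w t : ℂ) * deriv ψ t) :=
      (hsupp.mul_left).add (hsupp_d.mul_left)
    have hcont : Continuous (fun t => (w' t : ℂ) * ψ t + (w t : ℂ) * deriv ψ t) := by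
      fun_prop
    have hcs : HasCompactSupport (fun t => ‖(w' t : ℂ) * ψ t + (w t : ℂ) * deriv ψ t‖ ^ 2) :=
      hsupp_φd.comp_left (g := fun z : ℂ => ‖z‖ ^ 2) (by simp)
    have := ((hcont.norm.pow 2).integrable_of_hasCompactSupport hcs).integrableOn
      (s := Ioi b) (μ := volume)
    apply this.congr_fun _ measurableSet_Ioi
    intro t _
    simp only [hφderiv, Pi.pow_apply]
  have hint2 : IntegrableOn (fun t => (1 + 1 / (Real.cosh t) ^ 2) * ‖φ t‖ ^ 2) (Ioi b) := by
    have hφc : Continuous φ := by rw [hφ]; fun_prop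
    have hφsupp : HasCompactSupport φ := by rw [hφ]; exact hsupp.mul_left
    have hcont : Continuous (fun t => (1 + 1 / (Real.cosh t) ^ 2) * ‖φ t‖ ^ 2) := by
      apply Continuous.mul
      · apply Continuous.add continuous_const
        apply Continuous.div continuous_const (by fun_prop)
        intro t; exact pow_ne_zero 2 (hcosh_pos t).ne'
      · fun_prop
    have hsupp2 : HasCompactSupport (fun t => (1 + 1 / (Real.cosh t) ^ 2) * ‖φ t‖ ^ 2) :=
      HasCompactSupport.mul_left
        (hφsupp.comp_left (g := fun z : ℂ => ‖z‖ ^ 2) (by simp))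
    exact (hcont.integrable_of_hasCompactSupport hsupp2).integrableOn
  -- put it together
  have hsplit : (∫ t in Ioi b, ‖deriv ψ t‖ ^ 2 * Real.cosh t)
      = (∫ t in Ioi b, ‖deriv φ t‖ ^ 2)
        + (1 / 4) * (∫ t in Ioi b, (1 + 1 / (Real.cosh t) ^ 2) * ‖φ t‖ ^ 2)
        - (∫ t in Ioi b, F' t) := by
    have h4 : (1 / 4 : ℝ) * (∫ t in Ioi b, (1 + 1 / (Real.cosh t) ^ 2) * ‖φ t‖ ^ 2)
        = ∫ t in Ioi b, (1 / 4 : ℝ) * ((1 + 1 / (Real.cosh t) ^ 2) * ‖φ t‖ ^ 2) :=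
      (integral_smul (1 / 4 : ℝ) _).symm
    have hint2' : IntegrableOn
        (fun t => (1 / 4 : ℝ) * ((1 + 1 / (Real.cosh t) ^ 2) * ‖φ t‖ ^ 2)) (Ioi b) :=
      hint2.const_mul _
    have hintG : IntegrableOn
        (fun t => ‖deriv φ t‖ ^ 2 + (1 / 4 : ℝ) * ((1 + 1 / (Real.cosh t) ^ 2) * ‖φ t‖ ^ 2))
        (Ioi b) := hint1.add hint2'
    have hsum : (∫ t in Ioi b, ‖deriv ψ t‖ ^ 2 * Real.cosh t)
        = ∫ t in Ioi b,
            (‖deriv φ t‖ ^ 2 + (1 / 4 : ℝ) * ((1 + 1 / (Real.cosh t) ^ 2) * ‖φ t‖ ^ 2)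
              - F' t) :=
      setIntegral_congr_fun measurableSet_Ioi fun t _ => key t
    rw [hsum, integral_sub hintG hF'_int, integral_add hint1 hint2', ← h4]
  rw [hsplit, hIBP]
  have hFb : F b = Real.tanh b / 2 * ‖φ b‖ ^ 2 := by
    rw [hF_def, hφ]
    simp only [sq_norm_one]
    rw [hw_sq b, Real.tanh_eq_sinh_div_cosh]
    field_simp
  rw [hFb]
  ring
end

section
/- For ν > −1/2 and x > 1, the Legendre function of the second kind Q_ν(x) = ∫_0^∞ (x + √(x²−1) cosh t)^{−(ν+1)} dt satisfies the ratio bound Q_{ν+1}(x)/Q_ν(x) ≤ 1/(x + √(x²−1)). -/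
open Real MeasureTheory Set

/-- The Legendre function of the second kind (order 0, degree ν), for `x > 1`. -/
noncomputable def legendreQ (ν x : ℝ) : ℝ :=
  ∫ t in Ioi (0 : ℝ), (x + Real.sqrt (x ^ 2 - 1) * Real.cosh t) ^ (-(ν + 1))

lemma legendreQ_integrable (μ x : ℝ) (hμ : 0 < μ) (hx : 1 < x) :
    IntegrableOn (fun t => (x + Real.sqrt (x ^ 2 - 1) * Real.cosh t) ^ (-μ)) (Ioi (0:ℝ)) := by
  set s := Real.sqrt (x ^ 2 - 1) with hs
  have hs0 : 0 < s := Real.sqrt_pos.2 (by nlinarith)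
  have hpos : ∀ t : ℝ, 0 < x + s * Real.cosh t := fun t => by
    have h1 := Real.one_le_cosh t
    nlinarith
  have hcont : Continuous fun t : ℝ => (x + s * Real.cosh t) ^ (-μ) := by
    apply Continuous.rpow_const (by continuity)
    exact fun t => Or.inl (ne_of_gt (hpos t))
  apply Integrable.mono' (g := fun t => (s / 2) ^ (-μ) * Real.exp (-μ * t))
  · exact ((exp_neg_integrableOn_Ioi 0 hμ).const_mul _)
  · exact hcont.aestronglyMeasurable.restrict
  · filter_upwards with t
    rw [Real.norm_eq_abs, abs_of_nonneg (Real.rpow_nonneg (hpos t).le _)]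
    have hb : s * (Real.exp t / 2) ≤ x + s * Real.cosh t := by
      have : Real.exp t / 2 ≤ Real.cosh t := by
        rw [Real.cosh_eq]
        have := (Real.exp_pos (-t)).le
        linarith
      nlinarith
    have hb0 : 0 < s * (Real.exp t / 2) := by positivity
    calc (x + s * Real.cosh t) ^ (-μ) ≤ (s * (Real.exp t / 2)) ^ (-μ) :=
          Real.rpow_le_rpow_of_nonpos hb0 hb (by linarith)
      _ = (s / 2) ^ (-μ) * Real.exp (-μ * t) := by
          rw [show s * (Real.exp t / 2) = (s / 2) * Real.exp t by ring,
            Real.mul_rpow (by positivity) (Real.exp_pos t).le,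
            ← Real.exp_mul]
          ring_nf

/-- Ratio bound for Legendre functions of the second kind. -/
theorem stmt12 (ν x : ℝ) (hν : -(1/2 : ℝ) < ν) (hx : 1 < x) :
    legendreQ (ν + 1) x / legendreQ ν x ≤ 1 / (x + Real.sqrt (x ^ 2 - 1)) := by
  set s := Real.sqrt (x ^ 2 - 1) with hs
  have hs0 : 0 < s := Real.sqrt_pos.2 (by nlinarith)
  have hpos : ∀ t : ℝ, 0 < x + s * Real.cosh t := fun t => by
    have h1 := Real.one_le_cosh t
    nlinarith
  have hxs : 0 < x + s := by linarith
  have hint1 := legendreQ_integrable (ν + 1) x (by linarith) hx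
  have hint2 := legendreQ_integrable (ν + 1 + 1) x (by linarith) hx
  have hQpos : 0 < legendreQ ν x := by
    rw [legendreQ]
    rw [setIntegral_pos_iff_support_of_nonneg_ae]
    · have hsup : (Function.support fun t : ℝ =>
          (x + s * Real.cosh t) ^ (-(ν + 1))) ∩ Ioi 0 = Ioi 0 := by
        apply inter_eq_self_of_subset_right
        intro t _
        exact ne_of_gt (Real.rpow_pos_of_pos (hpos t) _)
      rw [hsup]
      simp
    · filter_upwards with t
      exact Real.rpow_nonneg (hpos t).le _
    · exact hint1
  have key : legendreQ (ν + 1) x * (x + s) ≤ legendreQ ν x := by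
    rw [legendreQ, legendreQ, ← integral_mul_const]
    apply setIntegral_mono_on (hint2.mul_const _) hint1 measurableSet_Ioi
    intro t _
    have hb := hpos t
    have hb1 : x + s ≤ x + s * Real.cosh t := by
      have := Real.one_le_cosh t; nlinarith
    have : (x + s * Real.cosh t) ^ (-(ν + 1 + 1)) =
        (x + s * Real.cosh t) ^ (-(ν + 1)) * (x + s * Real.cosh t)⁻¹ := by
      rw [← Real.rpow_neg_one (x + s * Real.cosh t), ← Real.rpow_add hb]
      ring_nf
    rw [this, mul_assoc]
    have h2 : (x + s * Real.cosh t)⁻¹ * (x + s) ≤ 1 := by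
      rw [inv_mul_le_iff₀ hb]; linarith
    calc (x + s * Real.cosh t) ^ (-(ν + 1)) * ((x + s * Real.cosh t)⁻¹ * (x + s))
        ≤ (x + s * Real.cosh t) ^ (-(ν + 1)) * 1 := by
          apply mul_le_mul_of_nonneg_left h2 (Real.rpow_nonneg hb.le _)
      _ = (x + s * Real.cosh t) ^ (-(ν + 1)) := mul_one _
  rw [div_le_div_iff₀ hQpos hxs, one_mul]
  exact key
end

section
/- Let φ : [0,∞) → ℝ be a C¹ function with φ, φ' ∈ L²((0,∞); sinh t dt), φ strictly decreasing, strictly convex, and satisfying the boundary condition −φ'(0) + α φ(0) = 0 for some α < 0. Assume ∫_0^∞ |φ'(t)|² cosh t dt + α|φ(0)|² > 0. Then (∫_0^∞ |φ'|² cosh t dt + α|φ(0)|²) / ∫_0^∞ |φ|² cosh t dt < (∫_0^∞ |φ'|² sinh t dt) / ∫_0^∞ |φ|² sinh t dt. -/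
open Real MeasureTheory Set

/-- Comparison of Rayleigh-type quotients for a decreasing convex radial ground
state, used for the monotonicity of the lowest Robin eigenvalue in the radius. -/
theorem stmt15 (φ : ℝ → ℝ) (hφ : ContDiff ℝ 1 φ)
    (hL2 : IntegrableOn (fun t => (φ t) ^ 2 * Real.sinh t) (Ioi 0))
    (hL2' : IntegrableOn (fun t => (deriv φ t) ^ 2 * Real.sinh t) (Ioi 0))
    (hanti : StrictAntiOn φ (Ici 0))
    (hconv : StrictConvexOn ℝ (Ici 0) φ)
    (α : ℝ) (hα : α < 0)
    (hbc : -deriv φ 0 + α * φ 0 = 0)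
    (hpos : 0 < (∫ t in Ioi (0:ℝ), (deriv φ t) ^ 2 * Real.cosh t) + α * (φ 0) ^ 2) :
    ((∫ t in Ioi (0:ℝ), (deriv φ t) ^ 2 * Real.cosh t) + α * (φ 0) ^ 2)
        / (∫ t in Ioi (0:ℝ), (φ t) ^ 2 * Real.cosh t)
      < (∫ t in Ioi (0:ℝ), (deriv φ t) ^ 2 * Real.sinh t)
        / (∫ t in Ioi (0:ℝ), (φ t) ^ 2 * Real.sinh t) := by
  have hdiff : Differentiable ℝ φ := hφ.differentiable one_ne_zero
  have hcont : Continuous φ := hdiff.continuous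
  have hcont' : Continuous (deriv φ) := hφ.continuous_deriv le_rfl
  -- φ is nonnegative on [0, ∞)
  have hφnonneg : ∀ t, 0 ≤ t → 0 ≤ φ t := by
    intro t0 ht0
    by_contra hneg
    push_neg at hneg
    set t1 := t0 + 1 with ht1def
    have ht1 : (0:ℝ) < t1 := by linarith
    have hφt1 : φ t1 < 0 := lt_trans (hanti ht0 (by simp only [mem_Ici]; linarith) (by linarith)) hneg
    set c : ℝ := φ t1 ^ 2 * Real.sinh t1 with hc
    have hsinh1 : 0 < Real.sinh t1 := Real.sinh_pos_iff.mpr ht1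
    have hcpos : 0 < c := by rw [hc]; nlinarith [mul_pos (neg_pos.mpr hφt1) (neg_pos.mpr hφt1)]
    have hint : IntegrableOn (fun t => (φ t) ^ 2 * Real.sinh t) (Ioi t1) :=
      hL2.mono_set (Ioi_subset_Ioi ht1.le)
    have hbound : ∀ᵐ t ∂(volume.restrict (Ioi t1)), ‖c‖ ≤ (φ t) ^ 2 * Real.sinh t := by
      refine (ae_restrict_iff' measurableSet_Ioi).mpr (ae_of_all _ fun t ht => ?_)
      have ht' : t1 < t := ht
      have h1 : φ t < φ t1 := hanti (by simp; linarith) (by simp; linarith) ht'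
      have h2 : φ t1 ^ 2 ≤ φ t ^ 2 := by nlinarith
      have h3 : Real.sinh t1 ≤ Real.sinh t := (Real.sinh_lt_sinh.mpr ht').le
      have h4 : (0:ℝ) < Real.sinh t1 := Real.sinh_pos_iff.mpr ht1
      rw [Real.norm_eq_abs, abs_of_pos hcpos]
      nlinarith
    have : Integrable (fun _ : ℝ => c) (volume.restrict (Ioi t1)) :=
      Integrable.mono' hint aestronglyMeasurable_const hbound
    rw [integrable_const_iff] at this
    rcases this with h | h
    · exact hcpos.ne' h
    · have h' := @measure_lt_top _ _ _ h univ
      simp [Measure.restrict_apply_univ, Real.volume_Ioi] at h'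
  have hφpos : ∀ t, 0 ≤ t → 0 < φ t := fun t ht =>
    lt_of_le_of_lt (hφnonneg (t + 1) (by linarith)) (hanti ht (by simp only [mem_Ici]; linarith) (by linarith))
  have hφ0 : 0 < φ 0 := hφpos 0 le_rfl
  have hd0 : deriv φ 0 = α * φ 0 := by linarith
  have hd0neg : deriv φ 0 < 0 := by nlinarith
  -- derivative is negative and bounded below by deriv φ 0 on [0,∞)
  have hdneg : ∀ t, 0 ≤ t → deriv φ t < 0 := by
    intro t ht
    have := hconv.convexOn.deriv_le_slope (x := t) (y := t + 1) ht (by simp; linarith)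
      (by linarith) (hdiff t)
    rw [slope_def_field] at this
    have h1 : φ (t + 1) < φ t := hanti ht (by simp only [mem_Ici]; linarith) (by linarith)
    calc deriv φ t ≤ (φ (t+1) - φ t) / (t + 1 - t) := this
      _ < 0 := by rw [show t + 1 - t = (1:ℝ) by ring]; simp; linarith
  have hdmono : ∀ t, 0 ≤ t → deriv φ 0 ≤ deriv φ t := fun t ht =>
    hconv.convexOn.monotoneOn_deriv (fun x hx => hdiff x) self_mem_Ici ht ht
  have hφle : ∀ t, 0 ≤ t → φ t ≤ φ 0 := by
    intro t ht
    rcases eq_or_lt_of_le ht with rfl | h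
    · exact le_rfl
    · exact (hanti self_mem_Ici ht h).le
  -- exponential integrability
  have hexp : IntegrableOn (fun t => Real.exp (-t)) (Ioi 0) := by
    have := exp_neg_integrableOn_Ioi (0:ℝ) (b := 1) one_pos
    simpa using this
  have hE_int : IntegrableOn (fun t => (φ t) ^ 2 * Real.exp (-t)) (Ioi 0) := by
    refine Integrable.mono' (hexp.const_mul ((φ 0) ^ 2))
      ((hcont.pow 2).mul (Real.continuous_exp.comp continuous_neg)).aestronglyMeasurable ?_
    refine (ae_restrict_iff' measurableSet_Ioi).mpr (ae_of_all _ fun t ht => ?_)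
    have ht' : (0:ℝ) < t := ht
    have h1 : 0 ≤ φ t := hφnonneg t ht'.le
    have h2 : φ t ≤ φ 0 := hφle t ht'.le
    have h3 : (0:ℝ) < Real.exp (-t) := Real.exp_pos _
    rw [Real.norm_eq_abs, abs_of_nonneg (by positivity)]
    exact mul_le_mul_of_nonneg_right (pow_le_pow_left₀ h1 h2 2) h3.le
  have hF_int : IntegrableOn (fun t => (deriv φ t) ^ 2 * Real.exp (-t)) (Ioi 0) := by
    refine Integrable.mono' (hexp.const_mul ((deriv φ 0) ^ 2))
      (((hcont'.pow 2).mul (Real.continuous_exp.comp continuous_neg)).aestronglyMeasurable) ?_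
    refine (ae_restrict_iff' measurableSet_Ioi).mpr (ae_of_all _ fun t ht => ?_)
    have ht' : (0:ℝ) < t := ht
    have h1 : deriv φ t < 0 := hdneg t ht'.le
    have h2 : deriv φ 0 ≤ deriv φ t := hdmono t ht'.le
    have h3 : (0:ℝ) < Real.exp (-t) := Real.exp_pos _
    rw [Real.norm_eq_abs, abs_of_nonneg (by positivity)]
    have h4 : (deriv φ t) ^ 2 ≤ (-deriv φ 0) ^ 2 := sq_le_sq' (by linarith) (by linarith)
    have h5 : (-deriv φ 0) ^ 2 = (deriv φ 0) ^ 2 := by ring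
    exact mul_le_mul_of_nonneg_right (by linarith) h3.le
  have hG_int : IntegrableOn (fun t => -deriv φ t * Real.exp (-t)) (Ioi 0) := by
    refine Integrable.mono' (hexp.const_mul (-deriv φ 0))
      ((hcont'.neg.mul (Real.continuous_exp.comp continuous_neg)).aestronglyMeasurable) ?_
    refine (ae_restrict_iff' measurableSet_Ioi).mpr (ae_of_all _ fun t ht => ?_)
    have ht' : (0:ℝ) < t := ht
    have h1 : deriv φ t < 0 := hdneg t ht'.le
    have h2 : deriv φ 0 ≤ deriv φ t := hdmono t ht'.le
    have h3 : (0:ℝ) < Real.exp (-t) := Real.exp_pos _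
    rw [Real.norm_eq_abs, abs_of_nonneg (mul_nonneg (by linarith) h3.le)]
    exact mul_le_mul_of_nonneg_right (by linarith) h3.le
  -- cosh = sinh + exp(-·)
  have hcosh : ∀ t : ℝ, Real.cosh t = Real.sinh t + Real.exp (-t) := by
    intro t
    rw [Real.cosh_eq, Real.sinh_eq]
    ring
  have hDsplit : (∫ t in Ioi (0:ℝ), (φ t) ^ 2 * Real.cosh t)
      = (∫ t in Ioi (0:ℝ), (φ t) ^ 2 * Real.sinh t) + ∫ t in Ioi (0:ℝ), (φ t) ^ 2 * Real.exp (-t) := by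
    rw [← integral_add hL2 hE_int]
    apply setIntegral_congr_fun measurableSet_Ioi
    intro t _
    simp only [hcosh]; ring
  have hNsplit : (∫ t in Ioi (0:ℝ), (deriv φ t) ^ 2 * Real.cosh t)
      = (∫ t in Ioi (0:ℝ), (deriv φ t) ^ 2 * Real.sinh t)
        + ∫ t in Ioi (0:ℝ), (deriv φ t) ^ 2 * Real.exp (-t) := by
    rw [← integral_add hL2' hF_int]
    apply setIntegral_congr_fun measurableSet_Ioi
    intro t _
    simp only [hcosh]; ring
  -- key bound: ∫ (-φ') e^{-t} ≤ φ 0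
  have hkey2 : (∫ t in Ioi (0:ℝ), -deriv φ t * Real.exp (-t)) ≤ φ 0 := by
    have htend := MeasureTheory.intervalIntegral_tendsto_integral_Ioi 0 hG_int
      (Filter.tendsto_id (α := ℝ))
    refine le_of_tendsto htend ?_
    filter_upwards [Filter.eventually_ge_atTop (0:ℝ)] with T hT
    have hgle : ∀ t ∈ Icc (0:ℝ) T, -deriv φ t * Real.exp (-t) ≤ -deriv φ t := by
      intro t ht
      have h1 : deriv φ t < 0 := hdneg t ht.1
      have h2 : Real.exp (-t) ≤ 1 := Real.exp_le_one_iff.mpr (by linarith [ht.1])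
      nlinarith [Real.exp_pos (-t)]
    have hint1 : IntervalIntegrable (fun t => -deriv φ t * Real.exp (-t)) volume 0 T :=
      ((hcont'.neg.mul (Real.continuous_exp.comp continuous_neg)).intervalIntegrable 0 T)
    have hint2 : IntervalIntegrable (fun t => -deriv φ t) volume 0 T :=
      hcont'.neg.intervalIntegrable 0 T
    have hmle : (∫ t in (0:ℝ)..T, -deriv φ t * Real.exp (-t)) ≤ ∫ t in (0:ℝ)..T, -deriv φ t :=
      intervalIntegral.integral_mono_on hT hint1 hint2 hgle
    have hftc : (∫ t in (0:ℝ)..T, deriv φ t) = φ T - φ 0 :=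
      intervalIntegral.integral_deriv_eq_sub (fun x _ => hdiff x) (hcont'.intervalIntegrable 0 T)
    have : (∫ t in (0:ℝ)..T, -deriv φ t) = φ 0 - φ T := by
      rw [intervalIntegral.integral_neg, hftc]; ring
    rw [this] at hmle
    have := hφnonneg T hT
    simp only [id_eq]
    linarith
  -- key bound: ∫ φ'^2 e^{-t} ≤ -α (φ 0)^2
  have hkey1 : (∫ t in Ioi (0:ℝ), (deriv φ t) ^ 2 * Real.exp (-t)) ≤ -α * (φ 0) ^ 2 := by
    have step1 : (∫ t in Ioi (0:ℝ), (deriv φ t) ^ 2 * Real.exp (-t))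
        ≤ ∫ t in Ioi (0:ℝ), -deriv φ 0 * (-deriv φ t * Real.exp (-t)) := by
      refine setIntegral_mono_on hF_int (hG_int.const_mul _) measurableSet_Ioi ?_
      intro t ht
      have ht' : (0:ℝ) < t := ht
      have h1 : deriv φ t < 0 := hdneg t ht'.le
      have h2 : deriv φ 0 ≤ deriv φ t := hdmono t ht'.le
      have h3 : (0:ℝ) < Real.exp (-t) := Real.exp_pos _
      have h5 : (deriv φ t) ^ 2 ≤ -deriv φ 0 * -deriv φ t := by nlinarith
      calc (deriv φ t) ^ 2 * Real.exp (-t) ≤ (-deriv φ 0 * -deriv φ t) * Real.exp (-t) :=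
            mul_le_mul_of_nonneg_right h5 h3.le
        _ = -deriv φ 0 * (-deriv φ t * Real.exp (-t)) := by ring
    rw [integral_const_mul] at step1
    have h4 : -deriv φ 0 * (∫ t in Ioi (0:ℝ), -deriv φ t * Real.exp (-t)) ≤ -deriv φ 0 * φ 0 := by
      apply mul_le_mul_of_nonneg_left hkey2 (by linarith)
    have : -deriv φ 0 * φ 0 = -α * (φ 0) ^ 2 := by rw [hd0]; ring
    linarith
  -- positivity of the two denominators
  have hsupp : ∀ (w : ℝ → ℝ), (∀ t, 0 < t → 0 < w t) → IntegrableOn (fun t => (φ t) ^ 2 * w t) (Ioi 0) →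
      0 < ∫ t in Ioi (0:ℝ), (φ t) ^ 2 * w t := by
    intro w hw hint
    rw [setIntegral_pos_iff_support_of_nonneg_ae]
    · have hsub : Ioi (0:ℝ) ⊆ Function.support (fun t => (φ t) ^ 2 * w t) := by
        intro t ht
        have : 0 < (φ t) ^ 2 * w t := mul_pos (pow_pos (hφpos t (le_of_lt ht)) 2) (hw t ht)
        exact this.ne'
      rw [inter_eq_self_of_subset_right hsub, Real.volume_Ioi]
      simp
    · refine (ae_restrict_iff' measurableSet_Ioi).mpr (ae_of_all _ fun t ht => ?_)
      exact (mul_pos (pow_pos (hφpos t (le_of_lt ht)) 2) (hw t ht)).le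
    · exact hint
  have hDs_pos : 0 < ∫ t in Ioi (0:ℝ), (φ t) ^ 2 * Real.sinh t :=
    hsupp _ (fun t ht => Real.sinh_pos_iff.mpr ht) hL2
  have hE_pos : 0 < ∫ t in Ioi (0:ℝ), (φ t) ^ 2 * Real.exp (-t) :=
    hsupp _ (fun t _ => Real.exp_pos _) hE_int
  have hDc_pos : (∫ t in Ioi (0:ℝ), (φ t) ^ 2 * Real.sinh t)
      < ∫ t in Ioi (0:ℝ), (φ t) ^ 2 * Real.cosh t := by
    rw [hDsplit]; linarith
  -- numerator comparison
  have hN : (∫ t in Ioi (0:ℝ), (deriv φ t) ^ 2 * Real.cosh t) + α * (φ 0) ^ 2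
      ≤ ∫ t in Ioi (0:ℝ), (deriv φ t) ^ 2 * Real.sinh t := by
    rw [hNsplit]; linarith
  calc ((∫ t in Ioi (0:ℝ), (deriv φ t) ^ 2 * Real.cosh t) + α * (φ 0) ^ 2)
        / (∫ t in Ioi (0:ℝ), (φ t) ^ 2 * Real.cosh t)
      < ((∫ t in Ioi (0:ℝ), (deriv φ t) ^ 2 * Real.cosh t) + α * (φ 0) ^ 2)
        / (∫ t in Ioi (0:ℝ), (φ t) ^ 2 * Real.sinh t) :=
        div_lt_div_of_pos_left hpos hDs_pos hDc_pos
    _ ≤ (∫ t in Ioi (0:ℝ), (deriv φ t) ^ 2 * Real.sinh t)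
        / (∫ t in Ioi (0:ℝ), (φ t) ^ 2 * Real.sinh t) :=
        by gcongr
end
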